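/- Let m ≥ 1, let Y be a real symmetric m×m matrix with −I_m ≺ Y ≺ I_m (i.e., I_m − Y and I_m + Y are positive definite), and let H be any real symmetric m×m matrix. Then tr( (I_m − Y)⁻¹ H (I_m − Y)⁻¹ H ) + tr( (I_m + Y)⁻¹ H (I_m + Y)⁻¹ H ) ≥ (1/m) · ( tr( ((I_m − Y)⁻¹ − (I_m + Y)⁻¹) H ) )². -/

import Mathlib

open Matrix Finset

section helpers

variable {m : ℕ}

private lemma stmt16_trace_diag_mul (d : Fin m → ℝ) (M : Matrix (Fin m) (Fin m) ℝ) :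
    Matrix.trace (diagonal d * M) = ∑ i, d i * M i i := by
  simp [Matrix.trace, Matrix.diag, Matrix.diagonal_mul]

private lemma stmt16_trace_dPdP (d e : Fin m → ℝ) (P : Matrix (Fin m) (Fin m) ℝ) :
    Matrix.trace (diagonal d * P * diagonal e * P)
      = ∑ i, ∑ j, d i * P i j * (e j * P j i) := by
  rw [mul_assoc, mul_assoc, stmt16_trace_diag_mul]
  simp [Matrix.mul_apply, Matrix.diagonal_apply, Finset.mul_sum, mul_assoc, ite_mul, mul_ite]

private lemma stmt16_conj_inv (U : Matrix (Fin m) (Fin m) ℝ)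
    (hU1 : star U * U = 1) (hU2 : U * star U = 1) (d : Fin m → ℝ) (hd : ∀ i, d i ≠ 0) :
    (U * diagonal d * star U)⁻¹ = U * diagonal (fun i => (d i)⁻¹) * star U := by
  apply inv_eq_right_inv
  simp only [Matrix.mul_assoc]
  rw [show star U * (U * (diagonal (fun i => (d i)⁻¹) * star U))
      = diagonal (fun i => (d i)⁻¹) * star U from by rw [← Matrix.mul_assoc, hU1, one_mul],
    ← Matrix.mul_assoc (diagonal d), diagonal_mul_diagonal]
  have : (fun i => d i * (d i)⁻¹) = fun _ => (1 : ℝ) := by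
    funext i; exact mul_inv_cancel₀ (hd i)
  rw [this, show (diagonal (fun _ : Fin m => (1:ℝ)) : Matrix (Fin m) (Fin m) ℝ) = 1 from
    diagonal_one, one_mul, hU2]

private lemma stmt16_trace_conj_lin (U D H : Matrix (Fin m) (Fin m) ℝ) :
    Matrix.trace (U * D * star U * H) = Matrix.trace (D * (star U * H * U)) := by
  rw [show U * D * star U * H = U * (D * (star U * H)) from by simp only [Matrix.mul_assoc],
    Matrix.trace_mul_comm]
  simp only [Matrix.mul_assoc]

private lemma stmt16_trace_conj_quad (U D E H : Matrix (Fin m) (Fin m) ℝ) :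
    Matrix.trace (U * D * star U * H * (U * E * star U) * H)
      = Matrix.trace (D * (star U * H * U) * E * (star U * H * U)) := by
  rw [show U * D * star U * H * (U * E * star U) * H
      = U * (D * (star U * H * U) * E * (star U * H)) from by simp only [Matrix.mul_assoc],
    Matrix.trace_mul_comm]
  simp only [Matrix.mul_assoc]

private lemma stmt16_key_ineq (hm : 1 ≤ m) (a b : Fin m → ℝ)
    (ha : ∀ i, 0 ≤ a i) (hb : ∀ i, 0 ≤ b i)
    (P : Matrix (Fin m) (Fin m) ℝ) (hP : ∀ i j, P j i = P i j) :
    (1 / (m : ℝ)) * ((∑ i, a i * P i i) - ∑ i, b i * P i i) ^ 2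
      ≤ (∑ i, ∑ j, a i * P i j * (a j * P j i))
        + ∑ i, ∑ j, b i * P i j * (b j * P j i) := by
  have hm0 : (0:ℝ) < m := by exact_mod_cast hm
  have h1 : ((∑ i, a i * P i i) - ∑ i, b i * P i i) ^ 2
      ≤ (m:ℝ) * ∑ i, ((a i - b i) * P i i) ^ 2 := by
    have := sq_sum_le_card_mul_sum_sq (s := (univ : Finset (Fin m)))
      (f := fun i => (a i - b i) * P i i)
    simpa [sub_mul, Finset.sum_sub_distrib] using this
  have h2 : ∑ i, ((a i - b i) * P i i) ^ 2
      ≤ (∑ i, a i * P i i * (a i * P i i)) + ∑ i, b i * P i i * (b i * P i i) := by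
    rw [← Finset.sum_add_distrib]
    refine Finset.sum_le_sum fun i _ => ?_
    nlinarith [mul_nonneg (ha i) (hb i), sq_nonneg (P i i), sq_nonneg ((a i + b i) * P i i)]
  have hterm : ∀ (c : Fin m → ℝ), (∀ i, 0 ≤ c i) → ∀ i j, 0 ≤ c i * P i j * (c j * P j i) := by
    intro c hc i j
    rw [hP i j]
    nlinarith [mul_nonneg (hc i) (hc j), sq_nonneg (P i j)]
  have h3 : ∀ (c : Fin m → ℝ), (∀ i, 0 ≤ c i) →
      ∑ i, c i * P i i * (c i * P i i) ≤ ∑ i, ∑ j, c i * P i j * (c j * P j i) := by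
    intro c hc
    refine Finset.sum_le_sum fun i _ => ?_
    exact Finset.single_le_sum (f := fun j => c i * P i j * (c j * P j i))
      (fun j _ => hterm c hc i j) (Finset.mem_univ i)
  calc (1 / (m : ℝ)) * ((∑ i, a i * P i i) - ∑ i, b i * P i i) ^ 2
      ≤ (1 / (m : ℝ)) * ((m:ℝ) * ∑ i, ((a i - b i) * P i i) ^ 2) := by
        apply mul_le_mul_of_nonneg_left h1 (by positivity)
    _ = ∑ i, ((a i - b i) * P i i) ^ 2 := by field_simp
    _ ≤ (∑ i, a i * P i i * (a i * P i i)) + ∑ i, b i * P i i * (b i * P i i) := h2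
    _ ≤ (∑ i, ∑ j, a i * P i j * (a j * P j i))
        + ∑ i, ∑ j, b i * P i j * (b j * P j i) := add_le_add (h3 a ha) (h3 b hb)

end helpers

theorem stmt16 {m : ℕ} (hm : 1 ≤ m)
    (Y : Matrix (Fin m) (Fin m) ℝ) (hY : Y.IsSymm)
    (h1 : ((1 : Matrix (Fin m) (Fin m) ℝ) - Y).PosDef)
    (h2 : ((1 : Matrix (Fin m) (Fin m) ℝ) + Y).PosDef)
    (H : Matrix (Fin m) (Fin m) ℝ) (hH : H.IsSymm) :
    (1 / (m : ℝ)) * (Matrix.trace ((((1 : Matrix (Fin m) (Fin m) ℝ) - Y)⁻¹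
        - ((1 : Matrix (Fin m) (Fin m) ℝ) + Y)⁻¹) * H)) ^ 2
      ≤ Matrix.trace (((1 : Matrix (Fin m) (Fin m) ℝ) - Y)⁻¹ * H
            * ((1 : Matrix (Fin m) (Fin m) ℝ) - Y)⁻¹ * H)
        + Matrix.trace (((1 : Matrix (Fin m) (Fin m) ℝ) + Y)⁻¹ * H
            * ((1 : Matrix (Fin m) (Fin m) ℝ) + Y)⁻¹ * H) := by
  have hY' : Y.IsHermitian := by
    rwa [Matrix.IsHermitian, conjTranspose_eq_transpose_of_trivial]
  set U : Matrix (Fin m) (Fin m) ℝ := (hY'.eigenvectorUnitary : Matrix (Fin m) (Fin m) ℝ) with hUdef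
  set lam : Fin m → ℝ := hY'.eigenvalues with hlamdef
  have hU1 : star U * U = 1 := mem_unitaryGroup_iff'.mp hY'.eigenvectorUnitary.2
  have hU2 : U * star U = 1 := mem_unitaryGroup_iff.mp hY'.eigenvectorUnitary.2
  have hspec : Y = U * diagonal lam * star U := by
    have := hY'.spectral_theorem
    simpa [RCLike.ofReal_real_eq_id] using this
  -- eigenvalue bounds
  have hvne : ∀ i, (⇑(hY'.eigenvectorBasis i) : Fin m → ℝ) ≠ 0 := by
    intro i hz
    have h1n := hY'.eigenvectorBasis.orthonormal.1 i
    have hz' : hY'.eigenvectorBasis i = 0 := by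
      ext j; exact congrFun hz j
    rw [hz'] at h1n
    simp at h1n
  have hdots : ∀ i, 0 < dotProduct (⇑(hY'.eigenvectorBasis i)) (⇑(hY'.eigenvectorBasis i)) := by
    intro i
    rcases lt_or_eq_of_le (Finset.sum_nonneg fun j _ =>
      mul_self_nonneg ((hY'.eigenvectorBasis i) j)) with h | h
    · exact h
    · exact absurd (dotProduct_self_eq_zero.mp h.symm) (hvne i)
  have hpos1 : ∀ i, 0 < 1 - lam i := by
    intro i
    have h := h1.dotProduct_mulVec_pos (hvne i)
    rw [sub_mulVec, one_mulVec, hY'.mulVec_eigenvectorBasis] at h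
    simp only [dotProduct_sub, dotProduct_smul, smul_eq_mul, star_trivial] at h
    nlinarith [hdots i]
  have hpos2 : ∀ i, 0 < 1 + lam i := by
    intro i
    have h := h2.dotProduct_mulVec_pos (hvne i)
    rw [add_mulVec, one_mulVec, hY'.mulVec_eigenvectorBasis] at h
    simp only [dotProduct_add, dotProduct_smul, smul_eq_mul, star_trivial] at h
    nlinarith [hdots i]
  -- diagonalizations of 1 ∓ Y and their inverses
  have hdm : (1 : Matrix (Fin m) (Fin m) ℝ) - Y = U * diagonal (fun i => 1 - lam i) * star U := by
    have : diagonal (fun i => 1 - lam i) = (1 : Matrix (Fin m) (Fin m) ℝ) - diagonal lam := by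
      rw [← diagonal_one, diagonal_sub]
    rw [this, Matrix.mul_sub, Matrix.sub_mul, Matrix.mul_one, hU2, ← hspec]
  have hdp : (1 : Matrix (Fin m) (Fin m) ℝ) + Y = U * diagonal (fun i => 1 + lam i) * star U := by
    have : diagonal (fun i => 1 + lam i) = (1 : Matrix (Fin m) (Fin m) ℝ) + diagonal lam := by
      rw [← diagonal_one, diagonal_add]
    rw [this, Matrix.mul_add, Matrix.add_mul, Matrix.mul_one, hU2, ← hspec]
  set a : Fin m → ℝ := fun i => (1 - lam i)⁻¹ with hadef
  set b : Fin m → ℝ := fun i => (1 + lam i)⁻¹ with hbdef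
  have hiA : ((1 : Matrix (Fin m) (Fin m) ℝ) - Y)⁻¹ = U * diagonal a * star U := by
    rw [hdm]; exact stmt16_conj_inv U hU1 hU2 _ fun i => ne_of_gt (hpos1 i)
  have hiB : ((1 : Matrix (Fin m) (Fin m) ℝ) + Y)⁻¹ = U * diagonal b * star U := by
    rw [hdp]; exact stmt16_conj_inv U hU1 hU2 _ fun i => ne_of_gt (hpos2 i)
  set P : Matrix (Fin m) (Fin m) ℝ := star U * H * U with hPdef
  have hPsym : ∀ i j, P j i = P i j := by
    have : P.IsSymm := by
      simp only [hPdef, Matrix.IsSymm, star_eq_conjTranspose,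
        conjTranspose_eq_transpose_of_trivial, transpose_mul, transpose_transpose, hH.eq]
      simp only [Matrix.mul_assoc]
    exact fun i j => this.apply i j
  -- rewrite the traces
  have tlin : Matrix.trace ((((1 : Matrix (Fin m) (Fin m) ℝ) - Y)⁻¹
      - ((1 : Matrix (Fin m) (Fin m) ℝ) + Y)⁻¹) * H)
      = (∑ i, a i * P i i) - ∑ i, b i * P i i := by
    rw [Matrix.sub_mul, Matrix.trace_sub, hiA, hiB,
      stmt16_trace_conj_lin, stmt16_trace_conj_lin, ← hPdef,
      stmt16_trace_diag_mul, stmt16_trace_diag_mul]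
  have tquadA : Matrix.trace (((1 : Matrix (Fin m) (Fin m) ℝ) - Y)⁻¹ * H
      * ((1 : Matrix (Fin m) (Fin m) ℝ) - Y)⁻¹ * H)
      = ∑ i, ∑ j, a i * P i j * (a j * P j i) := by
    rw [hiA, stmt16_trace_conj_quad, ← hPdef, stmt16_trace_dPdP]
  have tquadB : Matrix.trace (((1 : Matrix (Fin m) (Fin m) ℝ) + Y)⁻¹ * H
      * ((1 : Matrix (Fin m) (Fin m) ℝ) + Y)⁻¹ * H)
      = ∑ i, ∑ j, b i * P i j * (b j * P j i) := by
    rw [hiB, stmt16_trace_conj_quad, ← hPdef, stmt16_trace_dPdP]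
  rw [tlin, tquadA, tquadB]
  exact stmt16_key_ineq hm a b (fun i => le_of_lt (inv_pos.mpr (hpos1 i)))
    (fun i => le_of_lt (inv_pos.mpr (hpos2 i))) P hPsym
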